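/- The HP theory is a similarity-based causal theory: for every causal model M and basic formula φ, ButFor(M,φ) ⊆ HP(M,φ), and every V ∈ HP(M,φ) is a putative cause of φ in M with respect to HP. -/
import Mathlib


namespace HPFramework

open Classical

/-- A causal model in the Halpern–Pearl framework, over exogenous variables `U`,
endogenous variables `V` and value domain `D`.  It packages the causal structure
(the finite ranges of the variables), the DAG (the well-founded `parent` relation),
the structural equations `F` (each depending only on the exogenous variables and the
parents, and taking values in the range), and the context `ctx`. -/
structure CausalModel (U V D : Type) [Fintype U] [Fintype V] where
  rangeU : U → Finset D
  range : V → Finset D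
  rangeU_nonempty : ∀ W, (rangeU W).Nonempty
  range_nonempty : ∀ X, (range X).Nonempty
  parent : V → V → Prop
  acyclic : WellFounded parent
  F : V → (U → D) → (V → D) → D
  F_parents : ∀ X u (a b : V → D), (∀ Y, parent Y X → a Y = b Y) → F X u a = F X u b
  F_range : ∀ X u v, (∀ W, u W ∈ rangeU W) → (∀ Y, v Y ∈ range Y) → F X u v ∈ range X
  ctx : U → D
  ctx_range : ∀ W, ctx W ∈ rangeU W

variable {U V D : Type} [Fintype U] [Fintype V]

/-- The unique solution `S_M` of the system of structural equations of `M`. -/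
noncomputable def sol (M : CausalModel U V D) : V → D :=
  WellFounded.fix M.acyclic fun X ih =>
    M.F X M.ctx fun Y => if h : M.parent Y X then ih Y h else (M.range_nonempty Y).choose

/-- A partial, range-permitted assignment of values to the endogenous variables of `M`. -/
def PAssign (M : CausalModel U V D) : Type :=
  {g : V → Option D // ∀ X d, g X = some d → d ∈ M.range X}

/-- The intervened model `M_[X⃗ ← x⃗]`: the equation of each variable assigned a value
by `g` is replaced by the corresponding constant; other equations are unchanged. -/
noncomputable def intervene (M : CausalModel U V D) (g : PAssign M) : CausalModel U V D where
  rangeU := M.rangeU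
  range := M.range
  rangeU_nonempty := M.rangeU_nonempty
  range_nonempty := M.range_nonempty
  parent := M.parent
  acyclic := M.acyclic
  F := fun X u v => (g.1 X).getD (M.F X u v)
  F_parents := by
    intro X u a b hab
    cases h : g.1 X with
    | none => simp only [h, Option.getD_none]; exact M.F_parents X u a b hab
    | some d => simp [h]
  F_range := by
    intro X u v hu hv
    cases h : g.1 X with
    | none => simpa [h] using M.F_range X u v hu hv
    | some d => simpa [h] using g.2 X d h
  ctx := M.ctx
  ctx_range := M.ctx_range

/-- Basic formulas: Boolean combinations of atoms `(X = x)` with `X` endogenous. -/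
inductive BForm (V D : Type) : Type where
  | atom : V → D → BForm V D
  | not : BForm V D → BForm V D
  | and : BForm V D → BForm V D → BForm V D

/-- Evaluation of a basic formula at an assignment of values to the endogenous variables. -/
def BForm.eval (s : V → D) : BForm V D → Prop
  | .atom X x => s X = x
  | .not φ => ¬ φ.eval s
  | .and φ ψ => φ.eval s ∧ ψ.eval s

/-- `M ⊨ φ` for a basic formula `φ`, evaluated via the solution `S_M`. -/
def Sat (M : CausalModel U V D) (φ : BForm V D) : Prop := (BForm.eval (sol M)) φ

variable [DecidableEq V]

/-- The single intervention `[X ← x]` (with `x` in the range of `X`). -/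
noncomputable def single (M : CausalModel U V D) (X : V) (x : D)
    (hx : x ∈ M.range X) : PAssign M :=
  ⟨fun Y => if Y = X then some x else none, by
    intro Y d h
    simp only at h
    split at h
    next heq => cases h; exact heq ▸ hx
    next => cases h⟩

/-- The but-for theory: `X ∈ ButFor(M,φ)` iff `M ⊨ φ` and there is `x ∈ R(X)` with
`M ⊨ [X ← x] ¬φ`. -/
noncomputable def ButFor (M : CausalModel U V D) (φ : BForm V D) : Set V :=
  {X | Sat M φ ∧ ∃ x, ∃ hx : x ∈ M.range X, ¬ Sat (intervene M (single M X x hx)) φ}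

/-- `ℳ(A)` (relative to `M`): all models obtained from `M` by a (possibly partial)
range-permitted assignment to the variables in `A`, while any assigned variable outside
`A` is held fixed at its actual value in `M`. -/
def MSet (M : CausalModel U V D) (A : Set V) : Set (CausalModel U V D) :=
  {M' | ∃ g : PAssign M,
    (∀ X, X ∉ A → ∀ d, g.1 X = some d → d = sol M X) ∧ M' = intervene M g}

/-- A causal theory: a map assigning to every model and basic formula a set of
endogenous variables (the causes). -/
def CausalTheory (U V D : Type) [Fintype U] [Fintype V] : Type _ :=
  CausalModel U V D → BForm V D → Set V

/-- `X` is a putative cause of `φ` in `M` (w.r.t. the theory `C`). -/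
noncomputable def Putative (C : CausalTheory U V D) (M : CausalModel U V D)
    (φ : BForm V D) (X : V) : Prop :=
  ∃ M' ∈ MSet M (C M φ), sol M X = sol M' X ∧ X ∈ ButFor M' φ

/-- `X` is a preempted cause of `φ` in `M` (w.r.t. `C`): putative but not a cause. -/
noncomputable def Preempted (C : CausalTheory U V D) (M : CausalModel U V D)
    (φ : BForm V D) (X : V) : Prop :=
  Putative C M φ X ∧ X ∉ C M φ

/-- A theory is similarity-based if it recognises at least all but-for causes and at
most all putative causes. -/
noncomputable def SimilarityBased (C : CausalTheory U V D) : Prop :=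
  ∀ M φ, ButFor M φ ⊆ C M φ ∧ ∀ X ∈ C M φ, Putative C M φ X

/-- The principle of presumption. -/
noncomputable def Presumption (C : CausalTheory U V D) : Prop :=
  ∀ M φ X, Preempted C M φ X →
    ∀ M' ∈ MSet M (C M φ), sol M' X = sol M X → X ∈ ButFor M' φ →
      ∃ W, W ∉ C M φ ∧ sol M W ≠ sol M' W

/-- Empirical causal theories (fixed-point characterisation). -/
noncomputable def Empirical (C : CausalTheory U V D) : Prop :=
  ∀ M φ X, X ∈ C M φ ↔
    ∃ M' ∈ MSet M (C M φ), sol M X = sol M' X ∧ X ∈ ButFor M' φ ∧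
      ∀ W, W ∉ C M φ → sol M W = sol M' W

/-- The relation `M₁ ⊑_{C,φ} M₂`. -/
noncomputable def CRel (C : CausalTheory U V D) (φ : BForm V D)
    (M₁ M₂ : CausalModel U V D) : Prop :=
  M₂ ∈ MSet M₁ (C M₁ φ) ∧ Sat M₂ φ ∧ ∀ X, X ∉ C M₁ φ → sol M₁ X = sol M₂ X

/-- The closure property. -/
noncomputable def Closure (C : CausalTheory U V D) : Prop :=
  ∀ (M : CausalModel U V D) (φ : BForm V D) M', CRel C φ M M' → C M' φ ⊆ C M φ

/-- AC1 and AC2 of Halpern's (2015) definition, for the set `Xs`: `M ⊨ φ` and there is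
an intervention assigning (range-permitted) values to all of `Xs` and holding any other
assigned variable fixed at its actual value, after which `¬φ` holds. -/
noncomputable def AC12 (M : CausalModel U V D) (φ : BForm V D) (Xs : Set V) : Prop :=
  Sat M φ ∧ ∃ g : PAssign M,
    (∀ X ∈ Xs, (g.1 X).isSome) ∧
    (∀ X, X ∉ Xs → ∀ d, g.1 X = some d → d = sol M X) ∧
    ¬ Sat (intervene M g) φ

/-- `Xs` is a complex cause of `φ` in `M`: AC1, AC2 and the minimality condition AC3. -/
noncomputable def ComplexCause (M : CausalModel U V D) (φ : BForm V D) (Xs : Set V) : Prop :=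
  AC12 M φ Xs ∧ ∀ Ys : Set V, Ys ⊂ Xs → ¬ AC12 M φ Ys

/-- The HP theory: `X ∈ HP(M,φ)` iff `X` belongs to some complex cause of `φ` in `M`. -/
noncomputable def HP : CausalTheory U V D := fun M φ =>
  {X | ∃ Xs : Set V, X ∈ Xs ∧ ComplexCause M φ Xs}

/-- Helper: a relation admitting a strictly monotone rank function is well-founded. -/
theorem wf_of_rank {α : Type} (r : α → α → Prop) (rk : α → ℕ)
    (h : ∀ a b, r a b → rk a < rk b) : WellFounded r :=
  Subrelation.wf (fun {a b} hr => h a b hr) (InvImage.wf rk Nat.lt_wfRel.wf)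



omit [DecidableEq V] in
/-- The fixed-point equation satisfied by `sol`. -/
theorem sol_fix (M : CausalModel U V D) (X : V) :
    sol M X = M.F X M.ctx (sol M) := by
  conv_lhs => rw [sol, WellFounded.fix_eq]
  exact M.F_parents X M.ctx _ (sol M) (fun Y hY => by rw [dif_pos hY]; rfl)

omit [DecidableEq V] in
/-- Uniqueness of the solution. -/
theorem sol_unique (M : CausalModel U V D) (s : V → D)
    (h : ∀ X, s X = M.F X M.ctx s) : s = sol M := by
  funext X
  induction X using M.acyclic.induction with
  | _ X ih =>
    rw [h X, M.F_parents X M.ctx s (sol M) (fun Y hY => ih Y hY), sol_fix]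

omit [DecidableEq V] in
theorem sol_mem_range (M : CausalModel U V D) (X : V) : sol M X ∈ M.range X := by
  induction X using M.acyclic.induction with
  | _ X ih =>
    have heq : sol M X = M.F X M.ctx
        (fun Y => if h : M.parent Y X then sol M Y else (M.range_nonempty Y).choose) := by
      rw [sol_fix]
      exact M.F_parents X M.ctx (sol M) _ (fun Y hY => by rw [dif_pos hY])
    rw [heq]
    refine M.F_range X M.ctx _ M.ctx_range ?_
    intro Y
    by_cases hY : M.parent Y X
    · rw [dif_pos hY]; exact ih Y hY
    · rw [dif_neg hY]; exact (M.range_nonempty Y).choose_spec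

omit [DecidableEq V] in
/-- Intervening only with actual values does not change the solution. -/
theorem sol_intervene_actual (M : CausalModel U V D) (g : PAssign M)
    (hg : ∀ X d, g.1 X = some d → d = sol M X) :
    sol (intervene M g) = sol M := by
  refine (sol_unique (intervene M g) (sol M) ?_).symm
  intro X
  show sol M X = (g.1 X).getD (M.F X M.ctx (sol M))
  cases h : g.1 X with
  | none => simp [← sol_fix]
  | some d => simp [hg X d h]

omit [DecidableEq V] in
theorem Sat_of_sol_eq {M₁ M₂ : CausalModel U V D} (h : sol M₁ = sol M₂)
    {φ : BForm V D} : Sat M₁ φ ↔ Sat M₂ φ := by unfold Sat; rw [h]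

/-- the HP theory is similarity-based. -/
theorem hp_similarity_based {U V D : Type} [Fintype U] [Fintype V] [DecidableEq V] :
    SimilarityBased (HP (U := U) (V := V) (D := D)) := by
  intro M φ
  constructor
  · -- ButFor ⊆ HP
    rintro X ⟨hφ, x, hx, hns⟩
    refine ⟨{X}, rfl, ⟨hφ, single M X x hx, ?_, ?_, hns⟩, ?_⟩
    · rintro Y rfl
      simp [single]
    · rintro Y hY d hYd
      have hYX : Y ≠ X := fun h => hY h
      simp only [single, if_neg hYX] at hYd
      cases hYd
    · -- AC3 for the singleton
      intro Ys hYs hAC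
      have hYsempty : Ys = ∅ := Set.eq_empty_of_ssubset_singleton hYs
      subst hYsempty
      obtain ⟨hφ', g, _, hout, hns'⟩ := hAC
      have : sol (intervene M g) = sol M :=
        sol_intervene_actual M g (fun Y d hYd => hout Y (Set.notMem_empty Y) d hYd)
      exact hns' ((Sat_of_sol_eq this).mpr hφ')
  · -- every HP cause is putative
    rintro X ⟨Xs, hXXs, ⟨hφ, g, hsome, hout, hns⟩, hmin⟩
    -- each member of Xs belongs to HP M φ
    have hXsHP : Xs ⊆ HP M φ := fun Y hY =>
      ⟨Xs, hY, ⟨hφ, g, hsome, hout, hns⟩, hmin⟩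
    -- g' : like g but X pinned to its actual value
    have hsolX : sol M X ∈ M.range X := sol_mem_range M X
    set g' : PAssign M :=
      ⟨fun Y => if Y = X then some (sol M X) else g.1 Y, by
        intro Y d h
        dsimp only at h
        split_ifs at h with hYX
        · cases h; rw [hYX]; exact hsolX
        · exact g.2 Y d h⟩ with hg'def
    set M' := intervene M g' with hM'def
    -- sol M' X = sol M X
    have hsolM'X : sol M' X = sol M X := by
      rw [sol_fix M' X]
      show (g'.1 X).getD _ = _
      simp [hg'def]
    -- value that g assigns to X
    obtain ⟨x, hgX⟩ := Option.isSome_iff_exists.mp (hsome X hXXs)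
    have hxr : x ∈ M'.range X := g.2 X x hgX
    -- sol (intervene M' (single M' X x hxr)) = sol (intervene M g)
    have hsolcomp : sol (intervene M' (single M' X x hxr)) = sol (intervene M g) := by
      refine (sol_unique _ (sol (intervene M g)) ?_).symm
      intro Y
      have hfix : sol (intervene M g) Y
          = (g.1 Y).getD (M.F Y M.ctx (sol (intervene M g))) := sol_fix (intervene M g) Y
      show sol (intervene M g) Y =
        (((single M' X x hxr).1 Y).getD ((g'.1 Y).getD (M.F Y M.ctx (sol (intervene M g)))))
      by_cases hYX : Y = X
      · subst hYX
        rw [hfix]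
        simp [single, hgX]
      · rw [hfix]
        simp [single, hYX, hg'def]
    -- Sat M' φ (by minimality)
    have hSatM' : Sat M' φ := by
      by_contra hnM'
      refine hmin (Xs \ {X}) ⟨Set.diff_subset, fun h => ?_⟩ ⟨hφ, g', ?_, ?_, hnM'⟩
      · exact (h hXXs).2 rfl
      · rintro Y ⟨hYXs, hYX⟩
        show (if Y = X then some (sol M X) else g.1 Y).isSome
        rw [if_neg (by exact fun h => hYX h)]
        exact hsome Y hYXs
      · intro Y hY d hYd
        by_cases hYX : Y = X
        · subst hYX
          simp only [hg'def, if_pos rfl] at hYd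
          cases hYd; rfl
        · have hYnXs : Y ∉ Xs := fun h => hY ⟨h, hYX⟩
          simp only [hg'def, if_neg hYX] at hYd
          exact hout Y hYnXs d hYd
    -- conclude putativity
    refine ⟨M', ⟨g', ?_, rfl⟩, hsolM'X.symm, hSatM', x, hxr, ?_⟩
    · intro Y hY d hYd
      have hYnXs : Y ∉ Xs := fun h => hY (hXsHP h)
      have hYX : Y ≠ X := fun h => hY (hXsHP (h ▸ hXXs))
      simp only [hg'def, if_neg hYX] at hYd
      exact hout Y hYnXs d hYd
    · intro hSat
      exact hns ((Sat_of_sol_eq hsolcomp).mp hSat)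

end HPFramework
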